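/- Let B be a nondegenerate symmetric bilinear form on L = ℤⁿ with integer values, and let g be an n×n integer matrix of finite order (g^m = 1 for some m ≥ 1) with B(α g, β g) = B(α, β) for all α, β. Let L^g = {v ∈ ℤⁿ : v g = v}. Then for x ∈ ℤⁿ, the class of x in the quotient group ℤⁿ / ℤⁿ(1 − g) is a torsion element if and only if B(x, v) = 0 for every v ∈ L^g. Equivalently, the torsion subgroup of ℤⁿ / ℤⁿ(1 − g) is exactly L_g^⊥ / ℤⁿ(1 − g), where L_g^⊥ = {x ∈ ℤⁿ : B(x, v) = 0 for all v ∈ L^g}. -/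

import Mathlib

private lemma vecMul_finset_sum {n : ℕ} {ι : Type*} (s : Finset ι)
    (x : Fin n → ℤ) (M : ι → Matrix (Fin n) (Fin n) ℤ) :
    Matrix.vecMul x (∑ i ∈ s, M i) = ∑ i ∈ s, Matrix.vecMul x (M i) := by
  induction s using Finset.cons_induction with
  | empty => simp
  | cons a s h ih => simp [Matrix.vecMul_add, ih]

private lemma dotProduct_finset_sum {n : ℕ} {ι : Type*} (s : Finset ι)
    (u : Fin n → ℤ) (v : ι → (Fin n → ℤ)) :
    dotProduct u (∑ i ∈ s, v i) = ∑ i ∈ s, dotProduct u (v i) := by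
  induction s using Finset.cons_induction with
  | empty => simp
  | cons a s h ih => simp [dotProduct_add, ih]

private lemma finset_sum_dotProduct {n : ℕ} {ι : Type*} (s : Finset ι)
    (u : ι → (Fin n → ℤ)) (v : Fin n → ℤ) :
    dotProduct (∑ i ∈ s, u i) v = ∑ i ∈ s, dotProduct (u i) v := by
  induction s using Finset.cons_induction with
  | empty => simp
  | cons a s h ih => simp [add_dotProduct, ih]

private lemma vecMul_smul_matrix {n : ℕ} (a : ℤ) (v : Fin n → ℤ)
    (M : Matrix (Fin n) (Fin n) ℤ) :
    Matrix.vecMul v (a • M) = a • Matrix.vecMul v M := by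
  ext i
  simp [Matrix.vecMul, dotProduct, Finset.mul_sum, mul_left_comm]

/-- Let `B(α, β) = α G βᵀ` be a nondegenerate symmetric integer bilinear form on
`L = ℤⁿ` and `g` an integer matrix of finite order preserving `B`.  Then the class of
`x ∈ ℤⁿ` in `ℤⁿ / ℤⁿ(1 − g)` is a torsion element if and only if `B(x, v) = 0` for every
`g`-fixed vector `v`; that is, the torsion subgroup of `ℤⁿ / ℤⁿ(1 − g)` is
`L_g^⊥ / ℤⁿ(1 − g)`. -/
theorem torsion_iff_orthogonal_to_fixed_lattice
    (n : ℕ) (G : Matrix (Fin n) (Fin n) ℤ) (hsymm : G.IsSymm) (hnd : G.det ≠ 0)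
    (g : Matrix (Fin n) (Fin n) ℤ) (m : ℕ) (hm : 1 ≤ m) (hgm : g ^ m = 1)
    (hinv : ∀ α β : Fin n → ℤ,
      dotProduct (Matrix.vecMul (Matrix.vecMul α g) G) (Matrix.vecMul β g) =
        dotProduct (Matrix.vecMul α G) β) :
    ∀ x : Fin n → ℤ,
      IsOfFinAddOrder (Submodule.Quotient.mk x :
          (Fin n → ℤ) ⧸ LinearMap.range (Matrix.vecMulLinear (1 - g))) ↔
        ∀ v : Fin n → ℤ, Matrix.vecMul v g = v →
          dotProduct (Matrix.vecMul x G) v = 0 := by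
  classical
  intro x
  set N : Matrix (Fin n) (Fin n) ℤ := ∑ i ∈ Finset.range m, g ^ i with hNdef
  -- N * g = N
  have hNg : N * g = N := by
    have h1 : N * (g - 1) = g ^ m - 1 := geom_sum_mul g m
    rw [hgm, sub_self, mul_sub, mul_one, sub_eq_zero] at h1
    exact h1
  -- iterated invariance
  have hinv_pow : ∀ (i : ℕ) (α β : Fin n → ℤ),
      dotProduct (Matrix.vecMul (Matrix.vecMul α (g ^ i)) G)
        (Matrix.vecMul β (g ^ i)) = dotProduct (Matrix.vecMul α G) β := by
    intro i
    induction i with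
    | zero => intro α β; simp
    | succ i ih =>
      intro α β
      rw [pow_succ, ← Matrix.vecMul_vecMul, ← Matrix.vecMul_vecMul, hinv, ih]
  constructor
  · -- torsion → orthogonal to fixed vectors
    intro hfin v hv
    obtain ⟨k, hk, hks⟩ := isOfFinAddOrder_iff_nsmul_eq_zero.mp hfin
    have hmem : k • x ∈ LinearMap.range (Matrix.vecMulLinear (1 - g)) := by
      rw [← Submodule.Quotient.mk_eq_zero]
      rw [← Submodule.mkQ_apply, ← map_nsmul (Submodule.mkQ _) k x,
        Submodule.mkQ_apply] at hks
      exact hks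
    obtain ⟨α, hα⟩ := hmem
    have hB0 : dotProduct (Matrix.vecMul (k • x) G) v = 0 := by
      rw [← hα, Matrix.vecMulLinear_apply, Matrix.vecMul_vecMul, Matrix.sub_mul,
        one_mul, Matrix.vecMul_sub, sub_dotProduct, ← Matrix.vecMul_vecMul]
      have h2 := hinv α v
      rw [hv] at h2
      rw [h2, sub_self]
    have hcast : (k : ℤ) • x = k • x := Nat.cast_smul_eq_nsmul ℤ k x
    rw [← hcast, Matrix.smul_vecMul, smul_dotProduct, smul_eq_mul] at hB0
    rcases mul_eq_zero.mp hB0 with h | h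
    · exact absurd (by exact_mod_cast h) hk.ne'
    · exact h
  · -- orthogonal → torsion
    intro horth
    rw [isOfFinAddOrder_iff_nsmul_eq_zero]
    refine ⟨m, hm, ?_⟩
    rw [← Submodule.mkQ_apply, ← map_nsmul (Submodule.mkQ _) m x,
      Submodule.mkQ_apply, Submodule.Quotient.mk_eq_zero]
    -- key : x N = 0
    have hxN : Matrix.vecMul x N = 0 := by
      have hBy : ∀ w : Fin n → ℤ,
          dotProduct (Matrix.vecMul (Matrix.vecMul x N) G) w = 0 := by
        intro w
        have step : ∀ i ∈ Finset.range m,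
            dotProduct (Matrix.vecMul (Matrix.vecMul x (g ^ i)) G) w =
              dotProduct (Matrix.vecMul x G) (Matrix.vecMul w (g ^ (m - i))) := by
          intro i hi
          have hile : i ≤ m := (Finset.mem_range.mp hi).le
          have hxg : Matrix.vecMul (Matrix.vecMul x (g ^ i)) (g ^ (m - i)) = x := by
            rw [Matrix.vecMul_vecMul, ← pow_add, Nat.add_sub_cancel' hile, hgm,
              Matrix.vecMul_one]
          have h := hinv_pow (m - i) (Matrix.vecMul x (g ^ i)) w
          rw [hxg] at h
          exact h.symm
        have hsum1 : dotProduct (Matrix.vecMul (Matrix.vecMul x N) G) w =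
            ∑ i ∈ Finset.range m,
              dotProduct (Matrix.vecMul (Matrix.vecMul x (g ^ i)) G) w := by
          rw [hNdef, vecMul_finset_sum]
          rw [show Matrix.vecMul (∑ i ∈ Finset.range m, Matrix.vecMul x (g ^ i)) G =
              ∑ i ∈ Finset.range m, Matrix.vecMul (Matrix.vecMul x (g ^ i)) G from
            map_sum (Matrix.vecMulLinear G) _ _]
          exact finset_sum_dotProduct _ _ _
        have hNrev : ∑ i ∈ Finset.range m, g ^ (m - i) = N := by
          have hre := Finset.sum_range_reflect (fun j : ℕ => g ^ (j + 1)) m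
          have h1 : ∑ i ∈ Finset.range m, g ^ (m - i) =
              ∑ j ∈ Finset.range m, g ^ (j + 1) := by
            rw [← hre]
            refine Finset.sum_congr rfl fun i hi => ?_
            have := Finset.mem_range.mp hi
            congr 1
            omega
          have h2 : ∑ j ∈ Finset.range m, g ^ (j + 1) = N * g := by
            rw [hNdef, Finset.sum_mul]
            exact Finset.sum_congr rfl fun j _ => (pow_succ g j).symm
          rw [h1, h2, hNg]
        have hsum2 : ∑ i ∈ Finset.range m,
            dotProduct (Matrix.vecMul x G) (Matrix.vecMul w (g ^ (m - i))) =
              dotProduct (Matrix.vecMul x G) (Matrix.vecMul w N) := by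
          rw [← dotProduct_finset_sum, ← vecMul_finset_sum, hNrev]
        have hfix : Matrix.vecMul (Matrix.vecMul w N) g = Matrix.vecMul w N := by
          rw [Matrix.vecMul_vecMul, hNg]
        calc dotProduct (Matrix.vecMul (Matrix.vecMul x N) G) w
            = ∑ i ∈ Finset.range m,
              dotProduct (Matrix.vecMul (Matrix.vecMul x (g ^ i)) G) w := hsum1
          _ = ∑ i ∈ Finset.range m,
              dotProduct (Matrix.vecMul x G) (Matrix.vecMul w (g ^ (m - i))) :=
              Finset.sum_congr rfl step
          _ = dotProduct (Matrix.vecMul x G) (Matrix.vecMul w N) := hsum2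
          _ = 0 := horth _ hfix
      have hyG : Matrix.vecMul (Matrix.vecMul x N) G = 0 :=
        dotProduct_eq_zero _ hBy
      have hadj : Matrix.vecMul (Matrix.vecMul (Matrix.vecMul x N) G) G.adjugate =
          G.det • Matrix.vecMul x N := by
        rw [Matrix.vecMul_vecMul, Matrix.vecMul_vecMul, Matrix.mul_adjugate,
          Matrix.mul_smul, Matrix.mul_one, vecMul_smul_matrix]
      rw [hyG, Matrix.zero_vecMul] at hadj
      rcases smul_eq_zero.mp hadj.symm with h | h
      · exact absurd h hnd
      · exact h
    -- C with (1 - g) * C = (m : ℤ) • 1 - N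
    set C : Matrix (Fin n) (Fin n) ℤ :=
      ∑ i ∈ Finset.range m, ∑ j ∈ Finset.range i, g ^ j with hCdef
    have hcomm : Commute (1 - g) C := by
      refine Commute.sum_right _ _ _ fun i _ => Commute.sum_right _ _ _ fun j _ => ?_
      exact ((Commute.one_left g).sub_left (Commute.refl g)).pow_right j
    have hC : (1 - g) * C = (m : ℤ) • 1 - N := by
      rw [hCdef, Finset.mul_sum]
      have h1 : ∀ i, (1 - g) * ∑ j ∈ Finset.range i, g ^ j = 1 - g ^ i := by
        intro i
        have hgs := mul_geom_sum g i
        calc (1 - g) * ∑ j ∈ Finset.range i, g ^ j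
            = -((g - 1) * ∑ j ∈ Finset.range i, g ^ j) := by
              rw [← neg_mul, neg_sub]
          _ = -(g ^ i - 1) := by rw [hgs]
          _ = 1 - g ^ i := neg_sub _ _
      rw [Finset.sum_congr rfl fun i _ => h1 i, Finset.sum_sub_distrib,
        Finset.sum_const, Finset.card_range, hNdef, Nat.cast_smul_eq_nsmul]
    refine ⟨Matrix.vecMul x C, ?_⟩
    rw [Matrix.vecMulLinear_apply, Matrix.vecMul_vecMul, ← hcomm.eq, hC,
      Matrix.vecMul_sub, vecMul_smul_matrix, Matrix.vecMul_one, hxN, sub_zero,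
      Nat.cast_smul_eq_nsmul]
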